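/- arXiv:1507.02637 — 2 statements merged into one kernel-verified Lean document; each statement's English description precedes it below -/
import Mathlib

section
/- Consider the 2×2 ODE system d/dt (A, V) = M_ρ (A, V) where M_ρ = [[0, −ρ], [ρ, −ρ²]] and ρ ≥ 0. Define the Lyapunov functional L_ρ² = 2|(A,V)|² + |ρA|² − 2ρ Re(A V̄). Then along solutions, (1/2) d/dt L_ρ² + ρ² |(A,V)|² = 0, and there exists a universal constant C₀ > 0 (independent of ρ) such that C₀^{-1} L_ρ² ≤ |A|² + |ρA|² + |V|² ≤ C₀ L_ρ². -/
open Complex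

noncomputable section

/-- The Lyapunov functional `L_ρ² = 2|(A,V)|² + |ρA|² − 2ρ Re(A V̄)`. -/
def lyapunovSq (ρ : ℝ) (A V : ℝ → ℂ) (t : ℝ) : ℝ :=
  2 * (‖A t‖ ^ 2 + ‖V t‖ ^ 2) + ρ ^ 2 * ‖A t‖ ^ 2 -
    2 * ρ * (A t * (starRingEnd ℂ) (V t)).re

/-- **Lyapunov identity and uniform equivalence for the linearized mode system.**
If `d/dt (A,V) = M_ρ (A,V)` with `M_ρ = [[0, −ρ], [ρ, −ρ²]]`, then
`(1/2) d/dt L_ρ² + ρ² |(A,V)|² = 0` and, for a universal constant `C₀ > 0` independent of `ρ`,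
`C₀⁻¹ L_ρ² ≤ |A|² + |ρA|² + |V|² ≤ C₀ L_ρ²`. -/
theorem lyapunov_identity_and_equivalence :
    ∃ C₀ : ℝ, 0 < C₀ ∧
      ∀ ρ : ℝ, 0 ≤ ρ → ∀ A V : ℝ → ℂ,
        (∀ t, HasDerivAt A (-(ρ : ℂ) * V t) t) →
        (∀ t, HasDerivAt V ((ρ : ℂ) * A t - (ρ : ℂ) ^ 2 * V t) t) →
        ∀ t : ℝ,
          HasDerivAt (lyapunovSq ρ A V)
            (-2 * ρ ^ 2 * (‖A t‖ ^ 2 + ‖V t‖ ^ 2)) t ∧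
          C₀⁻¹ * lyapunovSq ρ A V t ≤
            ‖A t‖ ^ 2 + ρ ^ 2 * ‖A t‖ ^ 2 +
              ‖V t‖ ^ 2 ∧
          ‖A t‖ ^ 2 + ρ ^ 2 * ‖A t‖ ^ 2 + ‖V t‖ ^ 2 ≤
            C₀ * lyapunovSq ρ A V t := by
  refine ⟨3, by norm_num, fun ρ hρ A V hA hV t => ?_⟩
  -- component derivatives
  have hAr : ∀ s, HasDerivAt (fun s => (A s).re) (-ρ * (V s).re) s := fun s => by
    simpa [Complex.mul_re, Function.comp_def] using Complex.reCLM.hasFDerivAt.comp_hasDerivAt s (hA s)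
  have hAi : ∀ s, HasDerivAt (fun s => (A s).im) (-ρ * (V s).im) s := fun s => by
    simpa [Complex.mul_im, Function.comp_def] using Complex.imCLM.hasFDerivAt.comp_hasDerivAt s (hA s)
  have hVr : ∀ s, HasDerivAt (fun s => (V s).re) (ρ * (A s).re - ρ ^ 2 * (V s).re) s :=
    fun s => by
    simpa [Complex.sub_re, Complex.mul_re, Complex.mul_im, pow_two, Function.comp_def] using
      Complex.reCLM.hasFDerivAt.comp_hasDerivAt s (hV s)
  have hVi : ∀ s, HasDerivAt (fun s => (V s).im) (ρ * (A s).im - ρ ^ 2 * (V s).im) s :=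
    fun s => by
    simpa [Complex.sub_im, Complex.mul_re, Complex.mul_im, pow_two, Function.comp_def] using
      Complex.imCLM.hasFDerivAt.comp_hasDerivAt s (hV s)
  have hfun : lyapunovSq ρ A V = fun s =>
      2 * ((A s).re * (A s).re + (A s).im * (A s).im +
        ((V s).re * (V s).re + (V s).im * (V s).im)) +
      ρ ^ 2 * ((A s).re * (A s).re + (A s).im * (A s).im) -
      2 * ρ * ((A s).re * (V s).re + (A s).im * (V s).im) := by
    funext s
    simp only [lyapunovSq, Complex.sq_norm, Complex.normSq_apply, Complex.mul_re,
      Complex.conj_re, Complex.conj_im]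
    ring
  have key : HasDerivAt (lyapunovSq ρ A V)
      ((2 : ℝ) * ((-ρ * (V t).re) * (A t).re + (A t).re * (-ρ * (V t).re) +
          ((-ρ * (V t).im) * (A t).im + (A t).im * (-ρ * (V t).im)) +
          ((ρ * (A t).re - ρ ^ 2 * (V t).re) * (V t).re +
            (V t).re * (ρ * (A t).re - ρ ^ 2 * (V t).re) +
            ((ρ * (A t).im - ρ ^ 2 * (V t).im) * (V t).im +
              (V t).im * (ρ * (A t).im - ρ ^ 2 * (V t).im)))) +
        ρ ^ 2 * ((-ρ * (V t).re) * (A t).re + (A t).re * (-ρ * (V t).re) +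
          ((-ρ * (V t).im) * (A t).im + (A t).im * (-ρ * (V t).im))) -
        2 * ρ * ((-ρ * (V t).re) * (V t).re + (A t).re * (ρ * (A t).re - ρ ^ 2 * (V t).re) +
          ((-ρ * (V t).im) * (V t).im + (A t).im * (ρ * (A t).im - ρ ^ 2 * (V t).im)))) t := by
    rw [hfun]
    exact (((((hAr t).mul (hAr t)).add ((hAi t).mul (hAi t))).add
        (((hVr t).mul (hVr t)).add ((hVi t).mul (hVi t)))).const_mul 2 |>.add
      ((((hAr t).mul (hAr t)).add ((hAi t).mul (hAi t))).const_mul (ρ ^ 2)) |>.sub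
      ((((hAr t).mul (hVr t)).add ((hAi t).mul (hVi t))).const_mul (2 * ρ)))
  have hre : |(A t * (starRingEnd ℂ) (V t)).re| ≤ ‖A t‖ * ‖V t‖ := by
    calc |(A t * (starRingEnd ℂ) (V t)).re| ≤ ‖A t * (starRingEnd ℂ) (V t)‖ :=
          Complex.abs_re_le_norm _
      _ = ‖A t‖ * ‖V t‖ := by simp [map_mul]
  obtain ⟨hre1, hre2⟩ := abs_le.mp hre
  have ha : (0 : ℝ) ≤ ‖A t‖ := norm_nonneg _
  have hv : (0 : ℝ) ≤ ‖V t‖ := norm_nonneg _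
  refine ⟨?_, ?_, ?_⟩
  · convert key using 1
    simp only [Complex.sq_norm, Complex.normSq_apply]
    ring
  · rw [show ((3 : ℝ))⁻¹ * lyapunovSq ρ A V t =
        lyapunovSq ρ A V t / 3 by ring, div_le_iff₀ (by norm_num : (0:ℝ) < 3)]
    simp only [lyapunovSq]
    nlinarith [sq_nonneg (ρ * ‖A t‖ - ‖V t‖),
      mul_nonneg hρ (mul_nonneg ha hv), sq_nonneg (‖A t‖),
      mul_le_mul_of_nonneg_left hre1 hρ]
  · simp only [lyapunovSq]
    nlinarith [sq_nonneg (2 * ρ * ‖A t‖ - 3 * ‖V t‖),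
      mul_nonneg hρ (mul_nonneg ha hv), sq_nonneg (‖A t‖),
      mul_le_mul_of_nonneg_left hre2 hρ]
end
end

section
/- With notation as above, any solution of d/dt (A,V) = M_ρ (A,V) satisfies L_ρ²(t) ≤ e^{−c₀ min(1, ρ²) t} L_ρ²(0) for all t ≥ 0, for some universal constant c₀ > 0 independent of ρ. -/
open Complex

noncomputable section

lemma lyap_aux (m ρ ar ai vr vi : ℝ) (hm0 : 0 ≤ m) (hm1 : m ≤ 1) (hm2 : m ≤ ρ^2) :
    (2/5) * m * (2*(ar^2+ai^2+(vr^2+vi^2)) + ρ^2*(ar^2+ai^2) - 2*ρ*(ar*vr+ai*vi)) ≤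
      2*ρ^2*(ar^2+ai^2+(vr^2+vi^2)) := by
  nlinarith [mul_nonneg hm0 (add_nonneg (sq_nonneg (ρ*ar+vr)) (sq_nonneg (ρ*ai+vi))),
    mul_nonneg (sub_nonneg.2 hm2) (by positivity : (0:ℝ) ≤ ar^2+ai^2+vr^2+vi^2),
    mul_nonneg (sub_nonneg.2 hm1) (by positivity : (0:ℝ) ≤ ρ^2*(ar^2+ai^2)),
    mul_nonneg hm0 (by positivity : (0:ℝ) ≤ ar^2+ai^2),
    mul_nonneg (sq_nonneg ρ) (by positivity : (0:ℝ) ≤ vr^2+vi^2)]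

/-- **Exponential decay of the Lyapunov functional.** Any solution of
`d/dt (A,V) = M_ρ (A,V)` with `M_ρ = [[0, −ρ], [ρ, −ρ²]]` satisfies
`L_ρ²(t) ≤ e^{−c₀ min(1,ρ²) t} L_ρ²(0)` for all `t ≥ 0`, for a universal `c₀ > 0`
independent of `ρ`. -/
theorem lyapunov_exponential_decay :
    ∃ c₀ : ℝ, 0 < c₀ ∧
      ∀ ρ : ℝ, 0 ≤ ρ → ∀ A V : ℝ → ℂ,
        (∀ t, HasDerivAt A (-(ρ : ℂ) * V t) t) →
        (∀ t, HasDerivAt V ((ρ : ℂ) * A t - (ρ : ℂ) ^ 2 * V t) t) →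
        ∀ t : ℝ, 0 ≤ t →
          lyapunovSq ρ A V t ≤
            Real.exp (-c₀ * min 1 (ρ ^ 2) * t) * lyapunovSq ρ A V 0 := by
  refine ⟨2/5, by norm_num, ?_⟩
  intro ρ hρ A V hA hV t ht
  set m := min 1 (ρ ^ 2) with hmdef
  have hm0 : 0 ≤ m := le_min zero_le_one (sq_nonneg ρ)
  have hm1 : m ≤ 1 := min_le_left _ _
  have hm2 : m ≤ ρ ^ 2 := min_le_right _ _
  set k : ℝ := (2/5) * m with hk
  -- real and imaginary component derivatives
  have hAre : ∀ s, HasDerivAt (fun u => (A u).re) (-ρ * (V s).re) s := by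
    intro s
    have := (Complex.reCLM.hasFDerivAt (x := A s)).comp_hasDerivAt s (hA s)
    simpa [Function.comp_def] using this
  have hAim : ∀ s, HasDerivAt (fun u => (A u).im) (-ρ * (V s).im) s := by
    intro s
    have := (Complex.imCLM.hasFDerivAt (x := A s)).comp_hasDerivAt s (hA s)
    simpa [Function.comp_def] using this
  have hVre : ∀ s, HasDerivAt (fun u => (V u).re) (ρ * (A s).re - ρ ^ 2 * (V s).re) s := by
    intro s
    have := (Complex.reCLM.hasFDerivAt (x := V s)).comp_hasDerivAt s (hV s)
    simpa [Function.comp_def, ← Complex.ofReal_pow] using this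
  have hVim : ∀ s, HasDerivAt (fun u => (V u).im) (ρ * (A s).im - ρ ^ 2 * (V s).im) s := by
    intro s
    have := (Complex.imCLM.hasFDerivAt (x := V s)).comp_hasDerivAt s (hV s)
    simpa [Function.comp_def, ← Complex.ofReal_pow] using this
  -- rewrite the functional in components
  have hFeq : lyapunovSq ρ A V = fun s =>
      2 * ((A s).re ^ 2 + (A s).im ^ 2 + ((V s).re ^ 2 + (V s).im ^ 2)) +
        ρ ^ 2 * ((A s).re ^ 2 + (A s).im ^ 2) -
        2 * ρ * ((A s).re * (V s).re + (A s).im * (V s).im) := by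
    funext s
    simp only [lyapunovSq, Complex.sq_norm, Complex.normSq_apply, Complex.mul_re,
      Complex.conj_re, Complex.conj_im]
    ring
  -- derivative of the functional
  have hF : ∀ s, HasDerivAt (lyapunovSq ρ A V)
      (-2 * ρ ^ 2 * ((A s).re ^ 2 + (A s).im ^ 2 + ((V s).re ^ 2 + (V s).im ^ 2))) s := by
    intro s
    rw [hFeq]
    have h := ((((((hAre s).pow 2).add ((hAim s).pow 2)).add
        (((hVre s).pow 2).add ((hVim s).pow 2))).const_mul 2).add
        ((((hAre s).pow 2).add ((hAim s).pow 2)).const_mul (ρ ^ 2))).sub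
        ((((hAre s).mul (hVre s)).add ((hAim s).mul (hVim s))).const_mul (2 * ρ))
    refine h.congr_deriv ?_
    ring
  -- the rescaled function is antitone
  have hg : ∀ s, HasDerivAt (fun u => Real.exp (k * u) * lyapunovSq ρ A V u)
      (Real.exp (k * s) * (k * lyapunovSq ρ A V s +
        (-2 * ρ ^ 2 * ((A s).re ^ 2 + (A s).im ^ 2 + ((V s).re ^ 2 + (V s).im ^ 2))))) s := by
    intro s
    have hexp : HasDerivAt (fun u => Real.exp (k * u)) (k * Real.exp (k * s)) s := by
      have h0 := (Real.hasDerivAt_exp (k * s)).comp s ((hasDerivAt_id s).const_mul k)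
      simp only [Function.comp_def] at h0
      refine h0.congr_deriv ?_
      ring
    refine (hexp.mul (hF s)).congr_deriv ?_
    ring
  have hderiv_nonpos : ∀ s, Real.exp (k * s) * (k * lyapunovSq ρ A V s +
      (-2 * ρ ^ 2 * ((A s).re ^ 2 + (A s).im ^ 2 + ((V s).re ^ 2 + (V s).im ^ 2)))) ≤ 0 := by
    intro s
    have hexp : (0:ℝ) < Real.exp (k * s) := Real.exp_pos _
    set a := (A s).re ^ 2 + (A s).im ^ 2 with ha
    set v := (V s).re ^ 2 + (V s).im ^ 2 with hv
    have ha0 : 0 ≤ a := by positivity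
    have hv0 : 0 ≤ v := by positivity
    have hsq : 0 ≤ (ρ * (A s).re + (V s).re) ^ 2 + (ρ * (A s).im + (V s).im) ^ 2 := by
      positivity
    have hkey : k * lyapunovSq ρ A V s ≤ 2 * ρ ^ 2 * (a + v) := by
      rw [hFeq]
      exact lyap_aux m ρ (A s).re (A s).im (V s).re (V s).im hm0 hm1 hm2
    have : k * lyapunovSq ρ A V s +
        (-2 * ρ ^ 2 * ((A s).re ^ 2 + (A s).im ^ 2 + ((V s).re ^ 2 + (V s).im ^ 2))) ≤ 0 := by
      simp only [ha, hv] at hkey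
      linarith
    exact mul_nonpos_of_nonneg_of_nonpos hexp.le this
  -- antitone on [0, ∞)
  have hanti : AntitoneOn (fun u => Real.exp (k * u) * lyapunovSq ρ A V u) (Set.Ici 0) := by
    apply antitoneOn_of_deriv_nonpos (convex_Ici 0)
    · exact fun x _ => ((hg x).continuousAt).continuousWithinAt
    · intro x _
      exact ((hg x).differentiableAt).differentiableWithinAt
    · intro x _
      rw [(hg x).deriv]
      exact hderiv_nonpos x
  have hle : Real.exp (k * t) * lyapunovSq ρ A V t ≤ lyapunovSq ρ A V 0 := by
    have := hanti (Set.self_mem_Ici) (Set.mem_Ici.2 ht) ht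
    simpa using this
  have hexp : (0:ℝ) < Real.exp (k * t) := Real.exp_pos _
  have : lyapunovSq ρ A V t ≤ Real.exp (-(k * t)) * lyapunovSq ρ A V 0 := by
    rw [Real.exp_neg]
    rw [inv_mul_eq_div, le_div_iff₀ hexp]
    linarith [hle]
  calc lyapunovSq ρ A V t ≤ Real.exp (-(k * t)) * lyapunovSq ρ A V 0 := this
    _ = Real.exp (-(2/5) * m * t) * lyapunovSq ρ A V 0 := by rw [hk]; ring_nf
end
end
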